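/- Let g, q : ℝ^d → ℝ be α-strongly convex functions with α > 0, and define f = g − q. Suppose a sequence (xₜ) satisfies: for each t, there exists yₜ that is simultaneously a subgradient of q at xₜ and a subgradient of g at x_{t+1}. Then f(xₜ) ≥ f(x_{t+1}) + α‖x_{t+1} − xₜ‖² for all t; in particular the sequence (f(xₜ)) is nonincreasing. -/

import Mathlib

private lemma norm_combo {d : ℕ} (a b : EuclideanSpace ℝ (Fin d)) (t : ℝ) :
    ‖(1 - t) • a + t • b‖ ^ 2
      = (1 - t) * ‖a‖ ^ 2 + t * ‖b‖ ^ 2 - t * (1 - t) * ‖b - a‖ ^ 2 := by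
  have h : ∀ v : EuclideanSpace ℝ (Fin d), ‖v‖ ^ 2 = (inner ℝ v v : ℝ) := fun v =>
    (real_inner_self_eq_norm_sq v).symm
  rw [h, h, h, h]
  simp only [inner_add_left, inner_add_right, inner_sub_left, inner_sub_right,
    real_inner_smul_left, real_inner_smul_right, real_inner_comm b a]
  ring

private lemma strong_subgrad {d : ℕ} (q : EuclideanSpace ℝ (Fin d) → ℝ) (α : ℝ) (hα : 0 < α)
    (hq : ConvexOn ℝ Set.univ (fun x => q x - (α / 2) * ‖x‖ ^ 2))
    (a y : EuclideanSpace ℝ (Fin d))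
    (hy : ∀ z, q a + (inner ℝ (z - a) y : ℝ) ≤ q z) (b : EuclideanSpace ℝ (Fin d)) :
    q a + (inner ℝ (b - a) y : ℝ) + (α / 2) * ‖b - a‖ ^ 2 ≤ q b := by
  by_cases hab : b = a
  · subst hab; simp
  have hC : 0 < (α / 2) * ‖b - a‖ ^ 2 := by
    have : 0 < ‖b - a‖ := by
      rw [norm_pos_iff]
      exact sub_ne_zero.mpr hab
    positivity
  rw [show q a + (inner ℝ (b - a) y : ℝ) + (α / 2) * ‖b - a‖ ^ 2
      = (q a + (inner ℝ (b - a) y : ℝ) + (α / 2) * ‖b - a‖ ^ 2) from rfl]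
  refine le_of_forall_pos_le_add fun ε hε => ?_
  set C := (α / 2) * ‖b - a‖ ^ 2 with hCdef
  set t : ℝ := min 1 (ε / C) with htdef
  have ht0 : 0 < t := lt_min one_pos (div_pos hε hC)
  have ht1 : t ≤ 1 := min_le_left _ _
  have htC : t * C ≤ ε := by
    have : t ≤ ε / C := min_le_right _ _
    calc t * C ≤ (ε / C) * C := by nlinarith
    _ = ε := by field_simp
  -- convexity of h at the combination
  have hconv := hq.2 (Set.mem_univ a) (Set.mem_univ b) (by linarith : (0:ℝ) ≤ 1 - t)
    (le_of_lt ht0) (by ring)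
  simp only at hconv
  set m := (1 - t) • a + t • b with hm
  -- subgradient inequality at m
  have hsub := hy m
  have hma : m - a = t • (b - a) := by
    rw [hm]; module
  have hinner : (inner ℝ (m - a) y : ℝ) = t * (inner ℝ (b - a) y : ℝ) := by
    rw [hma, real_inner_smul_left]
  have hnorm := norm_combo a b t
  rw [← hm] at hnorm
  -- combine
  have key : q a + t * (inner ℝ (b - a) y : ℝ) ≤
      (1 - t) * q a + t * q b - (α / 2) * (t * (1 - t) * ‖b - a‖ ^ 2) := by
    have h1 : q m - (α / 2) * ‖m‖ ^ 2 ≤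
        (1 - t) * (q a - (α / 2) * ‖a‖ ^ 2) + t * (q b - (α / 2) * ‖b‖ ^ 2) := hconv
    rw [hinner] at hsub
    nlinarith [hnorm]
  have hdiv : q a + (inner ℝ (b - a) y : ℝ) + (α / 2) * (1 - t) * ‖b - a‖ ^ 2 ≤ q b := by
    nlinarith [key, ht0]
  calc q a + (inner ℝ (b - a) y : ℝ) + C
      ≤ q b + (α / 2) * t * ‖b - a‖ ^ 2 := by rw [hCdef]; nlinarith [hdiv]
    _ ≤ q b + ε := by
        have : (α / 2) * t * ‖b - a‖ ^ 2 = t * C := by rw [hCdef]; ring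
        linarith [htC, this ▸ le_refl (t * C)]

theorem stmt_5 {d : ℕ} (g q : EuclideanSpace ℝ (Fin d) → ℝ) (α : ℝ) (hα : 0 < α)
    (hg : ConvexOn ℝ Set.univ (fun x => g x - (α / 2) * ‖x‖ ^ 2))
    (hq : ConvexOn ℝ Set.univ (fun x => q x - (α / 2) * ‖x‖ ^ 2))
    (f : EuclideanSpace ℝ (Fin d) → ℝ) (hf : ∀ x, f x = g x - q x)
    (x : ℕ → EuclideanSpace ℝ (Fin d))
    (hstep : ∀ t, ∃ y : EuclideanSpace ℝ (Fin d),
      (∀ z, q (x t) + (inner ℝ (z - x t) y : ℝ) ≤ q z) ∧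
      (∀ z, g (x (t + 1)) + (inner ℝ (z - x (t + 1)) y : ℝ) ≤ g z)) :
    ∀ t, f (x (t + 1)) + α * ‖x (t + 1) - x t‖ ^ 2 ≤ f (x t) := by
  intro t
  obtain ⟨y, hyq, hyg⟩ := hstep t
  have h1 := strong_subgrad q α hα hq (x t) y hyq (x (t + 1))
  have h2 := strong_subgrad g α hα hg (x (t + 1)) y hyg (x t)
  have hinner : (inner ℝ (x t - x (t + 1)) y : ℝ) = -(inner ℝ (x (t + 1) - x t) y : ℝ) := by
    rw [← inner_neg_left]; congr 1; abel
  have hnorm : ‖x t - x (t + 1)‖ = ‖x (t + 1) - x t‖ := norm_sub_rev _ _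
  rw [hinner, hnorm] at h2
  rw [hf, hf]
  nlinarith [h1, h2]
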